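/- The commutator potential U pairs to zero against the zero-energy eigenfunction: ∫₀^∞ U(R) φ₀(R)² dR = ∫₀^∞ ( 48/(1+R²)² − 96R²/(1+R²)³ ) R⁵/(1+R²)⁴ dR = 0. (This is the statement F(0,0) = 0 for the kernel of the transference operator.) -/

import Mathlib

/- STATEMENT 11: the commutator potential U pairs to zero against the
zero-energy eigenfunction φ₀:
∫₀^∞ U(R) φ₀(R)² dR = ∫₀^∞ (48/(1+R²)² − 96R²/(1+R²)³) R⁵/(1+R²)⁴ dR = 0.
(This is the statement F(0,0) = 0 for the kernel of the transference
operator.) -/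

/-- The zero-energy eigenfunction `φ₀(R) = R^{5/2}/(1+R²)²`. -/
noncomputable def phi0 (R : ℝ) : ℝ := R ^ ((5 : ℝ) / 2) / (1 + R ^ 2) ^ 2

/-- The commutator potential `U(R) = 48/(1+R²)² − 96R²/(1+R²)³`. -/
noncomputable def Upot (R : ℝ) : ℝ := 48 / (1 + R ^ 2) ^ 2 - 96 * R ^ 2 / (1 + R ^ 2) ^ 3

open MeasureTheory Set Filter

/-- An explicit antiderivative of the integrand, vanishing at `0` and at `∞`. -/
noncomputable def Fant (R : ℝ) : ℝ :=
  8 / (1 + R ^ 2) ^ 3 - 24 / (1 + R ^ 2) ^ 4 + 24 / (1 + R ^ 2) ^ 5 - 8 / (1 + R ^ 2) ^ 6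

lemma one_add_sq_pos (R : ℝ) : (0:ℝ) < 1 + R ^ 2 := by positivity

lemma hasDerivAt_Fant (R : ℝ) :
    HasDerivAt Fant
      ((48 / (1 + R ^ 2) ^ 2 - 96 * R ^ 2 / (1 + R ^ 2) ^ 3) * (R ^ 5 / (1 + R ^ 2) ^ 4)) R := by
  have h : (1 + R ^ 2) ≠ 0 := (one_add_sq_pos R).ne'
  have hbase : HasDerivAt (fun R : ℝ => 1 + R ^ 2) (2 * R) R := by
    simpa using ((hasDerivAt_pow 2 R).const_add 1)
  have hp : ∀ n : ℕ, HasDerivAt (fun R : ℝ => (1 + R ^ 2) ^ n)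
      (n * (1 + R ^ 2) ^ (n - 1) * (2 * R)) R := fun n => by
    exact (HasDerivAt.comp R (hasDerivAt_pow n (1 + R ^ 2)) hbase)
  have hne : ∀ n : ℕ, ((1 + R ^ 2 : ℝ) ^ n) ≠ 0 := fun n => pow_ne_zero n h
  have h3 := ((hasDerivAt_const R (8:ℝ)).div (hp 3) (hne 3))
  have h4 := ((hasDerivAt_const R (24:ℝ)).div (hp 4) (hne 4))
  have h5 := ((hasDerivAt_const R (24:ℝ)).div (hp 5) (hne 5))
  have h6 := ((hasDerivAt_const R (8:ℝ)).div (hp 6) (hne 6))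
  have := ((h3.sub h4).add h5).sub h6
  refine this.congr_deriv ?_
  field_simp
  ring

lemma tendsto_Fant : Tendsto Fant atTop (nhds 0) := by
  have hb : Tendsto (fun R : ℝ => 1 + R ^ 2) atTop atTop :=
    tendsto_atTop_add_const_left _ 1 (tendsto_pow_atTop two_ne_zero)
  have hn : ∀ (n : ℕ), n ≠ 0 → ∀ (c : ℝ),
      Tendsto (fun R : ℝ => c / (1 + R ^ 2) ^ n) atTop (nhds 0) :=
    fun n hn c => Tendsto.div_atTop tendsto_const_nhds ((tendsto_pow_atTop hn).comp hb)
  have := (((hn 3 (by norm_num) 8).sub (hn 4 (by norm_num) 24)).add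
    (hn 5 (by norm_num) 24)).sub (hn 6 (by norm_num) 8)
  rw [show (0:ℝ) - 0 + 0 - 0 = 0 by norm_num] at this
  exact this

lemma integrand_cont : Continuous (fun R : ℝ =>
    (48 / (1 + R ^ 2) ^ 2 - 96 * R ^ 2 / (1 + R ^ 2) ^ 3) * (R ^ 5 / (1 + R ^ 2) ^ 4)) := by
  have h : ∀ R : ℝ, (1 + R ^ 2) ≠ 0 := fun R => (one_add_sq_pos R).ne'
  fun_prop (disch := intros; positivity)

lemma integrand_bound (R : ℝ) :
    ‖(48 / (1 + R ^ 2) ^ 2 - 96 * R ^ 2 / (1 + R ^ 2) ^ 3) * (R ^ 5 / (1 + R ^ 2) ^ 4)‖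
      ≤ 144 * (1 + R ^ 2)⁻¹ := by
  have ht : (0:ℝ) < 1 + R ^ 2 := one_add_sq_pos R
  have h : (1 + R ^ 2) ≠ 0 := ht.ne'
  have heq : (48 / (1 + R ^ 2) ^ 2 - 96 * R ^ 2 / (1 + R ^ 2) ^ 3) * (R ^ 5 / (1 + R ^ 2) ^ 4)
      = 48 * R ^ 5 * (1 - R ^ 2) / (1 + R ^ 2) ^ 7 := by field_simp; ring
  rw [heq, Real.norm_eq_abs, abs_div, abs_of_pos (pow_pos ht 7), div_le_iff₀ (pow_pos ht 7)]
  have hR : |R| ≤ 1 + R ^ 2 := by nlinarith [abs_nonneg R, sq_abs R]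
  have h1 : |1 - R ^ 2| ≤ 1 + R ^ 2 := by rw [abs_le]; constructor <;> nlinarith
  have h2 : |48 * R ^ 5 * (1 - R ^ 2)| ≤ 48 * |R| ^ 5 * (1 + R ^ 2) := by
    rw [abs_mul, abs_mul, abs_pow, abs_of_nonneg (show (0:ℝ) ≤ 48 by norm_num)]
    gcongr
  have h3 : |R| ^ 5 ≤ (1 + R ^ 2) ^ 5 := pow_le_pow_left₀ (abs_nonneg R) hR 5
  calc |48 * R ^ 5 * (1 - R ^ 2)| ≤ 48 * |R| ^ 5 * (1 + R ^ 2) := h2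
    _ ≤ 48 * (1 + R ^ 2) ^ 5 * (1 + R ^ 2) := by gcongr
    _ ≤ 144 * (1 + R ^ 2)⁻¹ * (1 + R ^ 2) ^ 7 := by
        rw [show (144:ℝ) * (1 + R ^ 2)⁻¹ * (1 + R ^ 2) ^ 7 = 144 * (1 + R ^ 2) ^ 6 by
          field_simp]
        nlinarith [pow_pos ht 5, pow_pos ht 6]

theorem U_orthogonal_to_phi0_squared :
    (∫ R in Set.Ioi (0 : ℝ), Upot R * (phi0 R) ^ 2)
      = (∫ R in Set.Ioi (0 : ℝ),
          (48 / (1 + R ^ 2) ^ 2 - 96 * R ^ 2 / (1 + R ^ 2) ^ 3)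
            * (R ^ 5 / (1 + R ^ 2) ^ 4)) ∧
    (∫ R in Set.Ioi (0 : ℝ),
        (48 / (1 + R ^ 2) ^ 2 - 96 * R ^ 2 / (1 + R ^ 2) ^ 3)
          * (R ^ 5 / (1 + R ^ 2) ^ 4)) = 0 := by
  constructor
  · apply setIntegral_congr_fun measurableSet_Ioi
    intro R hR
    have hR0 : (0:ℝ) < R := hR
    have hrpow : (R ^ ((5:ℝ)/2)) ^ 2 = R ^ 5 := by
      rw [← Real.rpow_natCast (R ^ ((5:ℝ)/2)) 2, ← Real.rpow_mul hR0.le]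
      norm_num
    simp only [phi0, Upot, div_pow, hrpow]
    ring
  · have hint : IntegrableOn (fun R : ℝ =>
        (48 / (1 + R ^ 2) ^ 2 - 96 * R ^ 2 / (1 + R ^ 2) ^ 3) * (R ^ 5 / (1 + R ^ 2) ^ 4))
        (Ioi 0) := by
      apply Integrable.integrableOn
      apply Integrable.mono' ((integrable_inv_one_add_sq).const_mul 144)
        integrand_cont.aestronglyMeasurable
      exact Filter.Eventually.of_forall integrand_bound
    have := integral_Ioi_of_hasDerivAt_of_tendsto
      (f := Fant)
      ((hasDerivAt_Fant 0).continuousAt.continuousWithinAt)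
      (fun x _ => hasDerivAt_Fant x) hint tendsto_Fant
    rw [this]
    simp [Fant]
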